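/- Let π₁ and π₂ be probability density functions on ℝ^d with Hellinger distance D_H(π₁,π₂) ≤ e < 1/√2. Then for any function h with finite variances under both densities, |E_{π₁}(h) - E_{π₂}(h)| ≤ (√2 e)/(1 - √2 e) · (√Var_{π₁}(h) + √Var_{π₂}(h)). -/

import Mathlib

open MeasureTheory

private lemma l2_mul_integrable {α : Type*} [MeasurableSpace α] {μ : Measure α} {f g : α → ℝ}
    (hfm : AEStronglyMeasurable f μ) (hgm : AEStronglyMeasurable g μ)
    (hf2 : Integrable (fun x => f x ^ 2) μ) (hg2 : Integrable (fun x => g x ^ 2) μ) :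
    Integrable (fun x => f x * g x) μ := by
  have hfL : MemLp f 2 μ := (memLp_two_iff_integrable_sq hfm).2 hf2
  have hgL : MemLp g 2 μ := (memLp_two_iff_integrable_sq hgm).2 hg2
  have : MemLp (f • g) 1 μ :=
    @MemLp.smul _ _ _ _ _ _ _ _ _ 2 2 1 g f hgL hfL ⟨by norm_num [ENNReal.inv_two_add_inv_two]⟩
  rw [memLp_one_iff_integrable] at this
  exact this

private lemma integral_cauchy_schwarz {α : Type*} [MeasurableSpace α] {μ : Measure α} {f g : α → ℝ}
    (hfm : AEStronglyMeasurable f μ) (hgm : AEStronglyMeasurable g μ)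
    (hf2 : Integrable (fun x => f x ^ 2) μ) (hg2 : Integrable (fun x => g x ^ 2) μ) :
    |∫ x, f x * g x ∂μ| ≤ Real.sqrt (∫ x, f x ^ 2 ∂μ) * Real.sqrt (∫ x, g x ^ 2 ∂μ) := by
  set A := ∫ x, f x ^ 2 ∂μ with hA
  set B := ∫ x, g x ^ 2 ∂μ with hB
  set C := ∫ x, f x * g x ∂μ with hC
  have hmul : Integrable (fun x => f x * g x) μ := l2_mul_integrable hfm hgm hf2 hg2
  have hA0 : 0 ≤ A := integral_nonneg fun x => sq_nonneg _
  have hB0 : 0 ≤ B := integral_nonneg fun x => sq_nonneg _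
  have key : ∀ t : ℝ, 0 ≤ B * (t * t) + (-2 * C) * t + A := by
    intro t
    have h1 : 0 ≤ ∫ x, (t * g x - f x) ^ 2 ∂μ := integral_nonneg fun x => sq_nonneg _
    have h2 : (∫ x, (t * g x - f x) ^ 2 ∂μ) = B * (t * t) + (-2 * C) * t + A := by
      have hpt : ∀ x, (t * g x - f x) ^ 2
          = (t * t) * g x ^ 2 - t * (2 * (f x * g x)) + f x ^ 2 := by intro x; ring
      simp_rw [hpt]
      have hint1 : Integrable (fun x => t*t*g x^2 - t*(2*(f x*g x))) μ :=
        (hg2.const_mul (t*t)).sub ((hmul.const_mul 2).const_mul t)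
      rw [integral_add hint1 hf2,
        integral_sub (hg2.const_mul (t*t)) ((hmul.const_mul 2).const_mul t)]
      simp_rw [integral_const_mul]
      ring
    linarith [h2 ▸ h1]
  have hd := discrim_le_zero key
  rw [discrim] at hd
  have hC2 : C ^ 2 ≤ A * B := by nlinarith
  calc |C| = Real.sqrt (C ^ 2) := (Real.sqrt_sq_eq_abs C).symm
    _ ≤ Real.sqrt (A * B) := Real.sqrt_le_sqrt hC2
    _ = Real.sqrt A * Real.sqrt B := Real.sqrt_mul hA0 B

/-- If the Hellinger distance between two probability densities `π₁, π₂` on `ℝ^d`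
is at most `e < 1/√2`, then for any `h` with finite variances under both,
`|E_{π₁}(h) - E_{π₂}(h)| ≤ (√2 e)/(1 - √2 e) (√Var_{π₁}(h) + √Var_{π₂}(h))`. -/
theorem stmt_0 {d : ℕ} (π₁ π₂ h : (Fin d → ℝ) → ℝ)
    (hπ₁pos : ∀ x, 0 ≤ π₁ x) (hπ₂pos : ∀ x, 0 ≤ π₂ x)
    (hπ₁int : ∫ x, π₁ x = 1) (hπ₂int : ∫ x, π₂ x = 1)
    (e : ℝ) (he : e < 1 / Real.sqrt 2)
    (hHell : Real.sqrt ((1/2) * ∫ x, (Real.sqrt (π₁ x) - Real.sqrt (π₂ x))^2) ≤ e)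
    (hmean₁ : Integrable (fun x => h x * π₁ x))
    (hmean₂ : Integrable (fun x => h x * π₂ x))
    (hvar₁ : Integrable (fun x => (h x - ∫ y, h y * π₁ y)^2 * π₁ x))
    (hvar₂ : Integrable (fun x => (h x - ∫ y, h y * π₂ y)^2 * π₂ x)) :
    |(∫ x, h x * π₁ x) - ∫ x, h x * π₂ x| ≤
      (Real.sqrt 2 * e) / (1 - Real.sqrt 2 * e) *
        (Real.sqrt (∫ x, (h x - ∫ y, h y * π₁ y)^2 * π₁ x) +
         Real.sqrt (∫ x, (h x - ∫ y, h y * π₂ y)^2 * π₂ x)) := by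
  -- basic setup
  set m₁ : ℝ := ∫ x, h x * π₁ x with hm₁
  set m₂ : ℝ := ∫ x, h x * π₂ x with hm₂
  set V₁ : ℝ := ∫ x, (h x - m₁)^2 * π₁ x with hV₁
  set V₂ : ℝ := ∫ x, (h x - m₂)^2 * π₂ x with hV₂
  have intπ₁ : Integrable π₁ := by
    by_contra hc; rw [integral_undef hc] at hπ₁int; norm_num at hπ₁int
  have intπ₂ : Integrable π₂ := by
    by_contra hc; rw [integral_undef hc] at hπ₂int; norm_num at hπ₂int
  have hs₁ : AEStronglyMeasurable (fun x => Real.sqrt (π₁ x)) volume :=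
    Real.continuous_sqrt.comp_aestronglyMeasurable intπ₁.aestronglyMeasurable
  have hs₂ : AEStronglyMeasurable (fun x => Real.sqrt (π₂ x)) volume :=
    Real.continuous_sqrt.comp_aestronglyMeasurable intπ₂.aestronglyMeasurable
  -- the function g = √π₁ - √π₂
  set g : (Fin d → ℝ) → ℝ := fun x => Real.sqrt (π₁ x) - Real.sqrt (π₂ x) with hg
  have hgm : AEStronglyMeasurable g volume := hs₁.sub hs₂
  have hg2int : Integrable (fun x => g x ^ 2) := by
    have hb : Integrable (fun x => 2 * (π₁ x + π₂ x)) := (intπ₁.add intπ₂).const_mul 2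
    refine Integrable.mono' hb (hgm.mul hgm |>.congr ?_) ?_
    · filter_upwards with x; simp [Pi.mul_apply, sq]
    · filter_upwards with x
      have a1 : Real.sqrt (π₁ x) ^ 2 = π₁ x := Real.sq_sqrt (hπ₁pos x)
      have a2 : Real.sqrt (π₂ x) ^ 2 = π₂ x := Real.sq_sqrt (hπ₂pos x)
      rw [Real.norm_eq_abs, abs_of_nonneg (sq_nonneg _)]
      simp only [hg]
      nlinarith [sq_nonneg (Real.sqrt (π₁ x) + Real.sqrt (π₂ x))]
  have hg20 : 0 ≤ ∫ x, g x ^ 2 := integral_nonneg fun x => sq_nonneg _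
  have he0 : 0 ≤ e := le_trans (Real.sqrt_nonneg _) hHell
  -- √(∫ g²) ≤ √2 e
  have hgbound : Real.sqrt (∫ x, g x ^ 2) ≤ Real.sqrt 2 * e := by
    have h1 : (1/2) * ∫ x, g x ^ 2 ≤ e ^ 2 := by
      have h2 : Real.sqrt ((1/2) * ∫ x, g x ^ 2) ≤ e := hHell
      have h3 : 0 ≤ (1/2) * ∫ x, g x ^ 2 := by linarith
      nlinarith [Real.sq_sqrt h3, Real.sqrt_nonneg ((1/2) * ∫ x, g x ^ 2)]
    calc Real.sqrt (∫ x, g x ^ 2) ≤ Real.sqrt (2 * e ^ 2) :=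
          Real.sqrt_le_sqrt (by linarith)
      _ = Real.sqrt 2 * e := by
          rw [Real.sqrt_mul (by norm_num) (e^2), Real.sqrt_sq he0]
  -- the functions f₁, f₂
  set f₁ : (Fin d → ℝ) → ℝ := fun x => (h x - m₂) * Real.sqrt (π₁ x) with hf₁
  set f₂ : (Fin d → ℝ) → ℝ := fun x => (h x - m₂) * Real.sqrt (π₂ x) with hf₂
  have hf₁eq : f₁ = fun x => (h x * π₁ x - m₂ * π₁ x) / Real.sqrt (π₁ x) := by
    funext x
    rcases eq_or_lt_of_le (hπ₁pos x) with h0 | h0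
    · simp [hf₁, ← h0]
    · have hs : Real.sqrt (π₁ x) ≠ 0 := ne_of_gt (Real.sqrt_pos.2 h0)
      rw [eq_div_iff hs]
      simp only [hf₁]
      rw [mul_assoc, Real.mul_self_sqrt (hπ₁pos x)]; ring
  have hf₂eq : f₂ = fun x => (h x * π₂ x - m₂ * π₂ x) / Real.sqrt (π₂ x) := by
    funext x
    rcases eq_or_lt_of_le (hπ₂pos x) with h0 | h0
    · simp [hf₂, ← h0]
    · have hs : Real.sqrt (π₂ x) ≠ 0 := ne_of_gt (Real.sqrt_pos.2 h0)
      rw [eq_div_iff hs]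
      simp only [hf₂]
      rw [mul_assoc, Real.mul_self_sqrt (hπ₂pos x)]; ring
  have hf₁m : AEStronglyMeasurable f₁ volume := by
    rw [hf₁eq]
    exact ((hmean₁.sub (intπ₁.const_mul m₂)).aemeasurable.div
      hs₁.aemeasurable).aestronglyMeasurable
  have hf₂m : AEStronglyMeasurable f₂ volume := by
    rw [hf₂eq]
    exact ((hmean₂.sub (intπ₂.const_mul m₂)).aemeasurable.div
      hs₂.aemeasurable).aestronglyMeasurable
  -- pointwise squares
  have hf₁sq : ∀ x, f₁ x ^ 2 = (h x - m₁)^2 * π₁ x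
      + (2*(m₁ - m₂)) * (h x * π₁ x - m₁ * π₁ x) + (m₁ - m₂)^2 * π₁ x := by
    intro x
    simp only [hf₁]
    rw [mul_pow, Real.sq_sqrt (hπ₁pos x)]; ring
  have hf₂sq : ∀ x, f₂ x ^ 2 = (h x - m₂)^2 * π₂ x := by
    intro x
    simp only [hf₂]
    rw [mul_pow, Real.sq_sqrt (hπ₂pos x)]
  have hf₁2int : Integrable (fun x => f₁ x ^ 2) := by
    have : Integrable (fun x => (h x - m₁)^2 * π₁ x
        + (2*(m₁ - m₂)) * (h x * π₁ x - m₁ * π₁ x) + (m₁ - m₂)^2 * π₁ x) :=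
      (hvar₁.add ((hmean₁.sub (intπ₁.const_mul m₁)).const_mul _)).add (intπ₁.const_mul _)
    exact this.congr (by filter_upwards with x; rw [hf₁sq x])
  have hf₂2int : Integrable (fun x => f₂ x ^ 2) := by
    exact hvar₂.congr (by filter_upwards with x; rw [hf₂sq x])
  -- values of ∫ f₁², ∫ f₂²
  have hintf₁sq : (∫ x, f₁ x ^ 2) = V₁ + (m₁ - m₂)^2 := by
    simp_rw [hf₁sq]
    have ia : Integrable (fun x => h x * π₁ x - m₁ * π₁ x) := hmean₁.sub (intπ₁.const_mul m₁)
    have ib : Integrable (fun x => (2*(m₁ - m₂)) * (h x * π₁ x - m₁ * π₁ x)) := ia.const_mul _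
    have ic : Integrable (fun x => (h x - m₁)^2 * π₁ x
        + (2*(m₁ - m₂)) * (h x * π₁ x - m₁ * π₁ x)) := hvar₁.add ib
    have id' : Integrable (fun x => (m₁ - m₂)^2 * π₁ x) := intπ₁.const_mul _
    rw [integral_add ic id', integral_add hvar₁ ib,
      integral_const_mul, integral_const_mul,
      integral_sub hmean₁ (intπ₁.const_mul m₁), integral_const_mul, hπ₁int]
    simp only [← hm₁, ← hV₁]
    ring
  have hintf₂sq : (∫ x, f₂ x ^ 2) = V₂ := by simp_rw [hf₂sq]; rfl
  -- key identity: m₁ - m₂ = ∫ f₁ g + ∫ f₂ g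
  have hi₁ : Integrable (fun x => f₁ x * g x) := l2_mul_integrable hf₁m hgm hf₁2int hg2int
  have hi₂ : Integrable (fun x => f₂ x * g x) := l2_mul_integrable hf₂m hgm hf₂2int hg2int
  have hkey : m₁ - m₂ = (∫ x, f₁ x * g x) + ∫ x, f₂ x * g x := by
    rw [← integral_add hi₁ hi₂]
    have hpt : ∀ x, f₁ x * g x + f₂ x * g x
        = (h x * π₁ x - m₂ * π₁ x) - (h x * π₂ x - m₂ * π₂ x) := by
      intro x
      have a1 : Real.sqrt (π₁ x) * Real.sqrt (π₁ x) = π₁ x := Real.mul_self_sqrt (hπ₁pos x)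
      have a2 : Real.sqrt (π₂ x) * Real.sqrt (π₂ x) = π₂ x := Real.mul_self_sqrt (hπ₂pos x)
      simp only [hf₁, hf₂, hg]
      linear_combination (h x - m₂) * a1 - (h x - m₂) * a2
    simp_rw [hpt]
    have ia : Integrable (fun x => h x * π₁ x - m₂ * π₁ x) := hmean₁.sub (intπ₁.const_mul m₂)
    have ib : Integrable (fun x => h x * π₂ x - m₂ * π₂ x) := hmean₂.sub (intπ₂.const_mul m₂)
    rw [integral_sub ia ib,
      integral_sub hmean₁ (intπ₁.const_mul m₂), integral_sub hmean₂ (intπ₂.const_mul m₂),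
      integral_const_mul, integral_const_mul, hπ₁int, hπ₂int]
    simp only [← hm₁, ← hm₂]
    ring
  -- Cauchy–Schwarz estimates
  have hV₁0 : 0 ≤ V₁ := integral_nonneg fun x => mul_nonneg (sq_nonneg _) (hπ₁pos x)
  have hV₂0 : 0 ≤ V₂ := integral_nonneg fun x => mul_nonneg (sq_nonneg _) (hπ₂pos x)
  set s : ℝ := Real.sqrt 2 * e with hsdef
  have hs0 : 0 ≤ s := mul_nonneg (Real.sqrt_nonneg _) he0
  have hs1 : s < 1 := by
    have h2 : (0:ℝ) < Real.sqrt 2 := Real.sqrt_pos.2 (by norm_num)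
    calc s < Real.sqrt 2 * (1 / Real.sqrt 2) := by
          exact mul_lt_mul_of_pos_left he h2
      _ = 1 := by field_simp
  set Δ : ℝ := |m₁ - m₂| with hΔ
  have hsqrt₁ : Real.sqrt (∫ x, f₁ x ^ 2) ≤ Real.sqrt V₁ + Δ := by
    rw [hintf₁sq]
    have h1 : V₁ + (m₁ - m₂)^2 ≤ (Real.sqrt V₁ + Δ)^2 := by
      have := Real.sq_sqrt hV₁0
      have hΔsq : (m₁ - m₂)^2 = Δ^2 := (sq_abs _).symm
      nlinarith [Real.sqrt_nonneg V₁, abs_nonneg (m₁ - m₂)]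
    calc Real.sqrt (V₁ + (m₁ - m₂)^2) ≤ Real.sqrt ((Real.sqrt V₁ + Δ)^2) :=
          Real.sqrt_le_sqrt h1
      _ = Real.sqrt V₁ + Δ := Real.sqrt_sq (by positivity)
  have hsqrt₂ : Real.sqrt (∫ x, f₂ x ^ 2) = Real.sqrt V₂ := by rw [hintf₂sq]
  have hcs₁ : |∫ x, f₁ x * g x| ≤ (Real.sqrt V₁ + Δ) * s := by
    calc |∫ x, f₁ x * g x| ≤ Real.sqrt (∫ x, f₁ x ^ 2) * Real.sqrt (∫ x, g x ^ 2) :=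
          integral_cauchy_schwarz hf₁m hgm hf₁2int hg2int
      _ ≤ (Real.sqrt V₁ + Δ) * s := by
          apply mul_le_mul hsqrt₁ hgbound (Real.sqrt_nonneg _) (by positivity)
  have hcs₂ : |∫ x, f₂ x * g x| ≤ Real.sqrt V₂ * s := by
    calc |∫ x, f₂ x * g x| ≤ Real.sqrt (∫ x, f₂ x ^ 2) * Real.sqrt (∫ x, g x ^ 2) :=
          integral_cauchy_schwarz hf₂m hgm hf₂2int hg2int
      _ ≤ Real.sqrt V₂ * s := by
          rw [hsqrt₂]
          exact mul_le_mul_of_nonneg_left hgbound (Real.sqrt_nonneg _)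
  have hΔle : Δ ≤ (Real.sqrt V₁ + Δ) * s + Real.sqrt V₂ * s := by
    calc Δ = |(∫ x, f₁ x * g x) + ∫ x, f₂ x * g x| := by rw [hΔ, hkey]
      _ ≤ |∫ x, f₁ x * g x| + |∫ x, f₂ x * g x| := abs_add_le _ _
      _ ≤ (Real.sqrt V₁ + Δ) * s + Real.sqrt V₂ * s := add_le_add hcs₁ hcs₂
  -- final arithmetic
  have h1s : 0 < 1 - s := by linarith
  rw [div_mul_eq_mul_div, le_div_iff₀ h1s]
  nlinarith [hΔle, abs_nonneg (m₁ - m₂)]
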